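/- Let f: ℝ → ℝ be 1-periodic and measurable with f restricted to [0,1] square-integrable, and let g: ℝ → ℝ be an even measurable function such that Σ_{l=1}^{∞} l · sup_{|x|≤1} |g(x+l)| < ∞ and g is bounded on [-1,1]. Then (1/n) ∫_0^n ∫_0^n f(v_1) f(v_2) g(v_1 − v_2) dv_1 dv_2 → ∫_0^1 ∫_0^1 f(v_1) f(v_2) [ g(v_1 − v_2) + 2 Σ_{l=1}^{∞} g(v_1 − v_2 + l) ] dv_1 dv_2 as n → ∞. -/

import Mathlib

open MeasureTheory Set Filter Topology

namespace Stmt5Aux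
noncomputable abbrev muI : Measure ℝ := volume.restrict (Ioc (0:ℝ) 1)
noncomputable def cI (f g : ℝ → ℝ) (m : ℤ) : ℝ :=
  ∫ p, f p.1 * f p.2 * g (p.1 - p.2 + m) ∂(muI.prod muI)

section main
variable {f g : ℝ → ℝ} {M : ℕ → ℝ}

lemma per_int (hfper : ∀ x : ℝ, f (x + 1) = f x) (j : ℤ) (x : ℝ) : f (x + j) = f x := by
  have h : Function.Periodic f 1 := hfper
  simpa using (h.int_mul j) x

lemma M_nonneg (hM : ∀ l : ℕ, 1 ≤ l → ∀ x ∈ Set.Icc (-1:ℝ) 1, |g (x + (l : ℝ))| ≤ M l)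
    (l : ℕ) (hl : 1 ≤ l) : 0 ≤ M l :=
  le_trans (abs_nonneg _) (hM l hl 0 (by norm_num))

/-- local boundedness of `g` -/
lemma gloc (hgeven : ∀ x, g (-x) = g x)
    (hgbdd : ∃ B : ℝ, ∀ x ∈ Set.Icc (-1:ℝ) 1, |g x| ≤ B)
    (hM : ∀ l : ℕ, 1 ≤ l → ∀ x ∈ Set.Icc (-1:ℝ) 1, |g (x + (l : ℝ))| ≤ M l)
    (R : ℕ) : ∃ C : ℝ, 0 ≤ C ∧ ∀ x : ℝ, |x| ≤ R → |g x| ≤ C := by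
  obtain ⟨B, hB⟩ := hgbdd
  have hB0 : 0 ≤ B := le_trans (abs_nonneg _) (hB 0 (by norm_num))
  refine ⟨B + ∑ l ∈ Finset.Icc 1 R, M l, ?_, ?_⟩
  · have : 0 ≤ ∑ l ∈ Finset.Icc 1 R, M l :=
      Finset.sum_nonneg fun l hl => M_nonneg hM l (Finset.mem_Icc.mp hl).1
    linarith
  · have key : ∀ x : ℝ, 0 ≤ x → x ≤ R → |g x| ≤ B + ∑ l ∈ Finset.Icc 1 R, M l := by
      intro x hx0 hxR
      have hsum0 : 0 ≤ ∑ l ∈ Finset.Icc 1 R, M l :=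
        Finset.sum_nonneg fun l hl => M_nonneg hM l (Finset.mem_Icc.mp hl).1
      by_cases hx1 : x ≤ 1
      · have := hB x ⟨by linarith, hx1⟩; linarith
      · push_neg at hx1
        set l := ⌊x⌋₊ with hl
        have hl1 : 1 ≤ l := Nat.le_floor (by exact_mod_cast hx1.le)
        have hlR : l ≤ R := by
          have := Nat.floor_le_of_le hxR
          simpa using this
        have hxl : x - l ∈ Icc (-1:ℝ) 1 := by
          constructor
          · have : (l:ℝ) ≤ x := Nat.floor_le (by linarith)
            linarith
          · have : x < l + 1 := Nat.lt_floor_add_one x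
            linarith
        have h1 : |g ((x - l) + l)| ≤ M l := hM l hl1 _ hxl
        have h2 : M l ≤ ∑ l' ∈ Finset.Icc 1 R, M l' :=
          Finset.single_le_sum (fun l' hl' => M_nonneg hM l' (Finset.mem_Icc.mp hl').1)
            (Finset.mem_Icc.mpr ⟨hl1, hlR⟩)
        have : (x - l) + l = x := by ring
        rw [this] at h1
        linarith
    intro x hx
    rcases le_or_gt 0 x with h | h
    · exact key x h (le_trans (le_abs_self x) hx)
    · have := key (-x) (by linarith) (le_trans (neg_le_abs x) hx)
      rwa [hgeven] at this

lemma hf1 (hfL2 : MemLp f 2 (volume.restrict (Set.Icc (0:ℝ) 1))) :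
    IntegrableOn f (Ioc 0 1) := by
  have h : Integrable f (volume.restrict (Icc (0:ℝ) 1)) := hfL2.integrable one_le_two
  rwa [IntegrableOn, restrict_Ioc_eq_restrict_Icc]

/-- `f` is interval integrable on every integer cell. -/
lemma fII (hfper : ∀ x : ℝ, f (x + 1) = f x) (hf : IntegrableOn f (Ioc 0 1)) (j : ℤ) :
    IntervalIntegrable f volume (j:ℝ) ((j:ℝ)+1) := by
  have h0 : IntervalIntegrable f volume 0 1 := by
    rw [intervalIntegrable_iff, uIoc_of_le zero_le_one]; exact hf
  have h2 := h0.comp_add_right (-(j:ℝ))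
  have he : (fun x => f (x + -(j:ℝ))) = f := by
    funext x
    have := per_int hfper (-j) x
    push_cast at this
    simpa using this
  rw [he] at h2
  have : (0:ℝ) - -(j:ℝ) = (j:ℝ) := by ring
  rw [this] at h2
  have : (1:ℝ) - -(j:ℝ) = (j:ℝ) + 1 := by ring
  rwa [this] at h2

lemma fIIn (hfper : ∀ x : ℝ, f (x + 1) = f x) (hf : IntegrableOn f (Ioc 0 1)) (n : ℕ) :
    IntervalIntegrable f volume 0 (n:ℝ) := by
  induction n with
  | zero => simp
  | succ n ih =>
    have h := fII hfper hf (n:ℤ)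
    push_cast at h ⊢
    exact ih.trans h

lemma fIOn (hfper : ∀ x : ℝ, f (x + 1) = f x) (hf : IntegrableOn f (Ioc 0 1)) (n : ℕ) :
    IntegrableOn f (Ioc 0 (n:ℝ)) := by
  have := fIIn hfper hf n
  rwa [intervalIntegrable_iff, uIoc_of_le (by positivity)] at this

lemma fIOnCell (hfper : ∀ x : ℝ, f (x + 1) = f x) (hf : IntegrableOn f (Ioc 0 1)) (j : ℤ) :
    IntegrableOn f (Ioc (j:ℝ) ((j:ℝ)+1)) := by
  have := fII hfper hf j
  rwa [intervalIntegrable_iff, uIoc_of_le (by linarith)] at this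


lemma ae_box : ∀ᵐ p ∂(muI.prod muI), p ∈ (Ioc (0:ℝ) 1) ×ˢ (Ioc (0:ℝ) 1) := by
  rw [muI, Measure.prod_restrict]
  exact ae_restrict_mem (measurableSet_Ioc.prod measurableSet_Ioc)

lemma box_diff {p : ℝ × ℝ} (hp : p ∈ (Ioc (0:ℝ) 1) ×ˢ (Ioc (0:ℝ) 1)) :
    p.1 - p.2 ∈ Icc (-1:ℝ) 1 := by
  obtain ⟨⟨h1, h2⟩, h3, h4⟩ := hp
  constructor <;> simp_all <;> linarith

lemma prodInt (hfmeas : Measurable f) (hgmeas : Measurable g)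
    (hf : IntegrableOn f (Ioc 0 1)) (m : ℝ) {C : ℝ}
    (hC : ∀ x ∈ Icc (-1:ℝ) 1, |g (x + m)| ≤ C) :
    Integrable (fun p : ℝ × ℝ => f p.1 * f p.2 * g (p.1 - p.2 + m)) (muI.prod muI) := by
  have hbase : Integrable (fun p : ℝ × ℝ => f p.1 * f p.2) (muI.prod muI) := hf.mul_prod hf
  apply Integrable.mono' (hbase.norm.const_mul C)
  · exact (((hfmeas.comp measurable_fst).mul (hfmeas.comp measurable_snd)).mul
      (hgmeas.comp ((measurable_fst.sub measurable_snd).add_const m))).aestronglyMeasurable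
  · filter_upwards [ae_box] with p hp
    have h1 := hC _ (box_diff hp)
    have : ‖f p.1 * f p.2 * g (p.1 - p.2 + m)‖ = |f p.1 * f p.2| * |g (p.1 - p.2 + m)| := by
      rw [Real.norm_eq_abs, abs_mul]
    rw [this]
    calc |f p.1 * f p.2| * |g (p.1 - p.2 + m)| ≤ |f p.1 * f p.2| * C :=
          mul_le_mul_of_nonneg_left h1 (abs_nonneg _)
      _ = C * ‖f p.1 * f p.2‖ := by rw [Real.norm_eq_abs]; ring

lemma normInt_bound (hfmeas : Measurable f) (hgmeas : Measurable g)
    (hf : IntegrableOn f (Ioc 0 1)) (m : ℝ) {C : ℝ}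
    (hC : ∀ x ∈ Icc (-1:ℝ) 1, |g (x + m)| ≤ C) :
    (∫ p, ‖f p.1 * f p.2 * g (p.1 - p.2 + m)‖ ∂(muI.prod muI)) ≤
      C * (∫ x, |f x| ∂muI) ^ 2 := by
  have habs : Integrable (fun p : ℝ × ℝ => |f p.1| * |f p.2|) (muI.prod muI) :=
    hf.norm.mul_prod hf.norm
  have h1 : (∫ p, ‖f p.1 * f p.2 * g (p.1 - p.2 + m)‖ ∂(muI.prod muI)) ≤
      ∫ p, C * (|f p.1| * |f p.2|) ∂(muI.prod muI) := by
    apply integral_mono_ae (prodInt hfmeas hgmeas hf m hC).norm (habs.const_mul C)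
    filter_upwards [ae_box] with p hp
    have hg := hC _ (box_diff hp)
    have : ‖f p.1 * f p.2 * g (p.1 - p.2 + m)‖ = |f p.1| * |f p.2| * |g (p.1 - p.2 + m)| := by
      rw [Real.norm_eq_abs, abs_mul, abs_mul]
    rw [this]
    calc |f p.1| * |f p.2| * |g (p.1 - p.2 + m)| ≤ |f p.1| * |f p.2| * C :=
          mul_le_mul_of_nonneg_left hg (by positivity)
      _ = C * (|f p.1| * |f p.2|) := by ring
  calc (∫ p, ‖f p.1 * f p.2 * g (p.1 - p.2 + m)‖ ∂(muI.prod muI)) ≤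
      ∫ p, C * (|f p.1| * |f p.2|) ∂(muI.prod muI) := h1
    _ = C * ∫ p, (fun q : ℝ × ℝ => |f q.1| * |f q.2|) p ∂(muI.prod muI) := by
        rw [integral_const_mul]
    _ = C * ((∫ x, |f x| ∂muI) * (∫ x, |f x| ∂muI)) := by
        rw [integral_prod_mul (fun x => |f x|) (fun x => |f x|)]
    _ = C * (∫ x, |f x| ∂muI) ^ 2 := by ring

lemma cI_abs_le (hfmeas : Measurable f) (hgmeas : Measurable g)
    (hf : IntegrableOn f (Ioc 0 1)) (m : ℤ) {C : ℝ}
    (hC : ∀ x ∈ Icc (-1:ℝ) 1, |g (x + (m:ℝ))| ≤ C) :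
    |cI f g m| ≤ C * (∫ x, |f x| ∂muI) ^ 2 := by
  unfold cI
  rw [← Real.norm_eq_abs]
  exact le_trans (norm_integral_le_integral_norm _) (normInt_bound hfmeas hgmeas hf (m:ℝ) hC)

lemma cI_even (hgeven : ∀ x, g (-x) = g x) (m : ℤ) : cI f g (-m) = cI f g m := by
  unfold cI
  have hswap := integral_prod_swap (μ := muI) (ν := muI)
    (fun p : ℝ × ℝ => f p.1 * f p.2 * g (p.1 - p.2 + (m:ℝ)))
  simp only [Prod.fst_swap, Prod.snd_swap] at hswap
  rw [← hswap]
  congr 1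
  funext z
  have harg : z.1 - z.2 + ((-m : ℤ):ℝ) = -(z.2 - z.1 + (m:ℝ)) := by push_cast; ring
  rw [harg, hgeven]
  ring

/-- iterated interval integral over the unit square equals the product integral -/
lemma iter_to_prod (F : ℝ → ℝ → ℝ)
    (hF : Integrable (fun p : ℝ × ℝ => F p.1 p.2) (muI.prod muI)) :
    (∫ v₁ in (0:ℝ)..1, ∫ v₂ in (0:ℝ)..1, F v₁ v₂) =
      ∫ p, F p.1 p.2 ∂(muI.prod muI) := by
  rw [intervalIntegral.integral_of_le zero_le_one]
  simp_rw [intervalIntegral.integral_of_le zero_le_one]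
  exact integral_integral hF


lemma shift_bound (hgeven : ∀ x, g (-x) = g x)
    (hgbdd : ∃ B : ℝ, ∀ x ∈ Set.Icc (-1:ℝ) 1, |g x| ≤ B)
    (hM : ∀ l : ℕ, 1 ≤ l → ∀ x ∈ Set.Icc (-1:ℝ) 1, |g (x + (l : ℝ))| ≤ M l)
    (m : ℤ) : ∃ C : ℝ, 0 ≤ C ∧ ∀ x ∈ Icc (-1:ℝ) 1, |g (x + (m:ℝ))| ≤ C := by
  rcases lt_trichotomy m 0 with hm | hm | hm
  · refine ⟨M (-m).toNat, M_nonneg hM _ (by omega), fun x hx => ?_⟩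
    have h1 : g (x + (m:ℝ)) = g ((-x) + (((-m).toNat : ℕ) : ℝ)) := by
      rw [← hgeven]
      congr 1
      have : ((-m).toNat : ℤ) = -m := Int.toNat_of_nonneg (by omega)
      have h2 : (((-m).toNat : ℕ) : ℝ) = -(m:ℝ) := by exact_mod_cast congrArg (Int.cast : ℤ → ℝ) this
      rw [h2]; ring
    rw [h1]
    exact hM _ (by omega) (-x) (by constructor <;> [linarith [hx.2]; linarith [hx.1]])
  · subst hm
    obtain ⟨B, hB⟩ := hgbdd
    exact ⟨B, le_trans (abs_nonneg _) (hB 0 (by norm_num)), fun x hx => by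
      simpa using hB x hx⟩
  · refine ⟨M m.toNat, M_nonneg hM _ (by omega), fun x hx => ?_⟩
    have h2 : ((m.toNat : ℕ) : ℝ) = (m:ℝ) := by
      exact_mod_cast congrArg (Int.cast : ℤ → ℝ) (Int.toNat_of_nonneg (by omega))
    have := hM m.toNat (by omega) x hx
    rwa [h2] at this

lemma cell (hfper : ∀ x : ℝ, f (x + 1) = f x) (hfmeas : Measurable f)
    (hgmeas : Measurable g) (hgeven : ∀ x, g (-x) = g x)
    (hgbdd : ∃ B : ℝ, ∀ x ∈ Set.Icc (-1:ℝ) 1, |g x| ≤ B)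
    (hM : ∀ l : ℕ, 1 ≤ l → ∀ x ∈ Set.Icc (-1:ℝ) 1, |g (x + (l : ℝ))| ≤ M l)
    (hf : IntegrableOn f (Ioc 0 1)) (j k : ℤ) :
    (∫ v₁ in (j:ℝ)..((j:ℝ)+1), ∫ v₂ in (k:ℝ)..((k:ℝ)+1), f v₁ * f v₂ * g (v₁ - v₂)) =
      cI f g (j - k) := by
  obtain ⟨C, hC0, hC⟩ := shift_bound hgeven hgbdd hM (j - k)
  have hinner : ∀ v₁ : ℝ, (∫ v₂ in (k:ℝ)..((k:ℝ)+1), f v₁ * f v₂ * g (v₁ - v₂)) =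
      ∫ v₂ in (0:ℝ)..1, f v₁ * f v₂ * g (v₁ - v₂ - (k:ℝ)) := by
    intro v₁
    have h := intervalIntegral.integral_comp_add_right (a := (0:ℝ)) (b := 1)
      (fun v₂ => f v₁ * f v₂ * g (v₁ - v₂)) (k:ℝ)
    rw [show (0:ℝ)+(k:ℝ) = (k:ℝ) by ring, show (1:ℝ)+(k:ℝ) = (k:ℝ)+1 by ring] at h
    rw [← h]
    apply intervalIntegral.integral_congr
    intro x _
    beta_reduce
    rw [per_int hfper k x]
    have harg : v₁ - (x + (k:ℝ)) = v₁ - x - (k:ℝ) := by ring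
    rw [harg]
  calc (∫ v₁ in (j:ℝ)..((j:ℝ)+1), ∫ v₂ in (k:ℝ)..((k:ℝ)+1), f v₁ * f v₂ * g (v₁ - v₂))
      = ∫ v₁ in (j:ℝ)..((j:ℝ)+1), ∫ v₂ in (0:ℝ)..1, f v₁ * f v₂ * g (v₁ - v₂ - (k:ℝ)) := by
        apply intervalIntegral.integral_congr
        intro v₁ _
        exact hinner v₁
    _ = ∫ v₁ in (0:ℝ)..1, ∫ v₂ in (0:ℝ)..1, f v₁ * f v₂ * g (v₁ - v₂ + ((j:ℝ) - (k:ℝ))) := by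
        have h := intervalIntegral.integral_comp_add_right (a := (0:ℝ)) (b := 1)
          (fun v₁ => ∫ v₂ in (0:ℝ)..1, f v₁ * f v₂ * g (v₁ - v₂ - (k:ℝ))) (j:ℝ)
        rw [show (0:ℝ)+(j:ℝ) = (j:ℝ) by ring, show (1:ℝ)+(j:ℝ) = (j:ℝ)+1 by ring] at h
        rw [← h]
        apply intervalIntegral.integral_congr
        intro x _
        simp only []
        rw [per_int hfper j x]
        apply intervalIntegral.integral_congr
        intro v₂ _
        beta_reduce
        have harg : x + (j:ℝ) - v₂ - (k:ℝ) = x - v₂ + ((j:ℝ) - (k:ℝ)) := by ring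
        rw [harg]
    _ = cI f g (j - k) := by
        have hC' : ∀ x ∈ Icc (-1:ℝ) 1, |g (x + ((j:ℝ) - (k:ℝ)))| ≤ C := by
          intro x hx
          have := hC x hx
          rwa [show (((j - k : ℤ)):ℝ) = (j:ℝ) - (k:ℝ) by push_cast; ring] at this
        rw [iter_to_prod (fun v₁ v₂ => f v₁ * f v₂ * g (v₁ - v₂ + ((j:ℝ) - (k:ℝ))))
          (prodInt hfmeas hgmeas hf ((j:ℝ) - (k:ℝ)) hC')]
        unfold cI
        congr 1
        funext p
        rw [show (((j - k : ℤ)):ℝ) = (j:ℝ) - (k:ℝ) by push_cast; ring]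


lemma abs_le_of_mem_Icc {a b x : ℝ} (h : x ∈ Icc a b) : |x| ≤ |a| + |b| := by
  rcases abs_cases x with ⟨he, _⟩ | ⟨he, _⟩ <;> rw [he] <;>
    [linarith [h.2, le_abs_self b, abs_nonneg a]; linarith [h.1, neg_le_abs a, abs_nonneg b]]

lemma II_inner (hfmeas : Measurable f) (hgmeas : Measurable g)
    (hgeven : ∀ x, g (-x) = g x)
    (hgbdd : ∃ B : ℝ, ∀ x ∈ Set.Icc (-1:ℝ) 1, |g x| ≤ B)
    (hM : ∀ l : ℕ, 1 ≤ l → ∀ x ∈ Set.Icc (-1:ℝ) 1, |g (x + (l : ℝ))| ≤ M l)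
    (v₁ a b : ℝ) (hab : a ≤ b) (hfab : IntegrableOn f (Ioc a b)) :
    IntervalIntegrable (fun v₂ => f v₁ * f v₂ * g (v₁ - v₂)) volume a b := by
  rw [intervalIntegrable_iff, uIoc_of_le hab]
  obtain ⟨C, hC0, hC⟩ := gloc hgeven hgbdd hM ⌈|v₁| + |a| + |b|⌉₊
  apply Integrable.mono' (hfab.norm.const_mul (|f v₁| * C))
  · exact ((measurable_const.mul hfmeas).mul
      (hgmeas.comp (measurable_const.sub measurable_id))).aestronglyMeasurable
  · filter_upwards [ae_restrict_mem measurableSet_Ioc] with v₂ hv₂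
    have h2 : |v₂| ≤ |a| + |b| := abs_le_of_mem_Icc (Ioc_subset_Icc_self hv₂)
    have h1 : |v₁ - v₂| ≤ (⌈|v₁| + |a| + |b|⌉₊ : ℝ) := by
      have := Nat.le_ceil (|v₁| + |a| + |b|)
      have h3 := abs_sub (v₁) (v₂)
      calc |v₁ - v₂| ≤ |v₁| + |v₂| := abs_sub _ _
        _ ≤ |v₁| + (|a| + |b|) := by linarith
        _ ≤ _ := by linarith
    have hg := hC _ h1
    have : ‖f v₁ * f v₂ * g (v₁ - v₂)‖ = |f v₁| * |f v₂| * |g (v₁ - v₂)| := by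
      rw [Real.norm_eq_abs, abs_mul, abs_mul]
    rw [this]
    calc |f v₁| * |f v₂| * |g (v₁ - v₂)| ≤ |f v₁| * |f v₂| * C :=
          mul_le_mul_of_nonneg_left hg (by positivity)
      _ = |f v₁| * C * ‖f v₂‖ := by rw [Real.norm_eq_abs]; ring

lemma II_outer (hfmeas : Measurable f) (hgmeas : Measurable g)
    (hgeven : ∀ x, g (-x) = g x)
    (hgbdd : ∃ B : ℝ, ∀ x ∈ Set.Icc (-1:ℝ) 1, |g x| ≤ B)
    (hM : ∀ l : ℕ, 1 ≤ l → ∀ x ∈ Set.Icc (-1:ℝ) 1, |g (x + (l : ℝ))| ≤ M l)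
    (a b c d : ℝ) (hab : a ≤ b) (hcd : c ≤ d)
    (hfab : IntegrableOn f (Ioc a b)) (hfcd : IntegrableOn f (Ioc c d)) :
    IntervalIntegrable (fun v₁ => ∫ v₂ in c..d, f v₁ * f v₂ * g (v₁ - v₂)) volume a b := by
  have hfcdII : IntervalIntegrable f volume c d := by
    rw [intervalIntegrable_iff, uIoc_of_le hcd]; exact hfcd
  rw [intervalIntegrable_iff, uIoc_of_le hab]
  obtain ⟨C, hC0, hC⟩ := gloc hgeven hgbdd hM ⌈|a| + |b| + |c| + |d|⌉₊
  set D := ∫ v₂ in Ioc c d, |f v₂| with hD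
  have hD0 : 0 ≤ D := setIntegral_nonneg measurableSet_Ioc (fun _ _ => abs_nonneg _)
  apply Integrable.mono' (hfab.norm.const_mul (C * D))
  · have he : (fun v₁ => ∫ v₂ in c..d, f v₁ * f v₂ * g (v₁ - v₂)) =
        fun v₁ => ∫ v₂ in Ioc c d, f v₁ * f v₂ * g (v₁ - v₂) := by
      funext v₁; exact intervalIntegral.integral_of_le hcd
    rw [he]
    have hSM : StronglyMeasurable (Function.uncurry fun v₁ v₂ => f v₁ * f v₂ * g (v₁ - v₂)) :=
      (((hfmeas.comp measurable_fst).mul (hfmeas.comp measurable_snd)).mul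
        (hgmeas.comp (measurable_fst.sub measurable_snd))).stronglyMeasurable
    exact (hSM.integral_prod_right (ν := volume.restrict (Ioc c d))).aestronglyMeasurable
  · filter_upwards [ae_restrict_mem measurableSet_Ioc] with v₁ hv₁
    have hv₁' : |v₁| ≤ |a| + |b| := abs_le_of_mem_Icc (Ioc_subset_Icc_self hv₁)
    have key : ∀ v₂ ∈ Icc c d, |f v₁ * f v₂ * g (v₁ - v₂)| ≤ (C * |f v₁|) * |f v₂| := by
      intro v₂ hv₂
      have hv₂' : |v₂| ≤ |c| + |d| := abs_le_of_mem_Icc hv₂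
      have h1 : |v₁ - v₂| ≤ (⌈|a| + |b| + |c| + |d|⌉₊ : ℝ) := by
        have := Nat.le_ceil (|a| + |b| + |c| + |d|)
        calc |v₁ - v₂| ≤ |v₁| + |v₂| := abs_sub _ _
          _ ≤ _ := by linarith
      have hg := hC _ h1
      rw [abs_mul, abs_mul]
      calc |f v₁| * |f v₂| * |g (v₁ - v₂)| ≤ |f v₁| * |f v₂| * C :=
            mul_le_mul_of_nonneg_left hg (by positivity)
        _ = (C * |f v₁|) * |f v₂| := by ring
    calc ‖∫ v₂ in c..d, f v₁ * f v₂ * g (v₁ - v₂)‖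
        = |∫ v₂ in c..d, f v₁ * f v₂ * g (v₁ - v₂)| := Real.norm_eq_abs _
      _ ≤ ∫ v₂ in c..d, |f v₁ * f v₂ * g (v₁ - v₂)| :=
          intervalIntegral.abs_integral_le_integral_abs hcd
      _ ≤ ∫ v₂ in c..d, (C * |f v₁|) * |f v₂| := by
          apply intervalIntegral.integral_mono_on hcd
            (II_inner hfmeas hgmeas hgeven hgbdd hM v₁ c d hcd hfcd).abs
            ((hfcdII.norm).const_mul _) key
      _ = (C * |f v₁|) * ∫ v₂ in c..d, |f v₂| := intervalIntegral.integral_const_mul _ _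
      _ = (C * |f v₁|) * D := by rw [hD, intervalIntegral.integral_of_le hcd]
      _ = C * D * ‖f v₁‖ := by rw [Real.norm_eq_abs]; ring

lemma decomp (hfper : ∀ x : ℝ, f (x + 1) = f x) (hfmeas : Measurable f)
    (hgmeas : Measurable g) (hgeven : ∀ x, g (-x) = g x)
    (hgbdd : ∃ B : ℝ, ∀ x ∈ Set.Icc (-1:ℝ) 1, |g x| ≤ B)
    (hM : ∀ l : ℕ, 1 ≤ l → ∀ x ∈ Set.Icc (-1:ℝ) 1, |g (x + (l : ℝ))| ≤ M l)
    (hf : IntegrableOn f (Ioc 0 1)) (n : ℕ) :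
    (∫ v₁ in (0:ℝ)..(n:ℝ), ∫ v₂ in (0:ℝ)..(n:ℝ), f v₁ * f v₂ * g (v₁ - v₂)) =
      ∑ j ∈ Finset.range n, ∑ k ∈ Finset.range n, cI f g ((j:ℤ) - (k:ℤ)) := by
  have hfcell : ∀ i : ℕ, IntegrableOn f (Ioc (i:ℝ) ((i:ℝ)+1)) := by
    intro i
    have := fIOnCell hfper hf (i:ℤ)
    simpa using this
  have hinner : ∀ v₁ : ℝ, (∫ v₂ in (0:ℝ)..(n:ℝ), f v₁ * f v₂ * g (v₁ - v₂)) =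
      ∑ k ∈ Finset.range n, ∫ v₂ in ((k:ℕ):ℝ)..(((k:ℕ):ℝ)+1), f v₁ * f v₂ * g (v₁ - v₂) := by
    intro v₁
    have hsum := intervalIntegral.sum_integral_adjacent_intervals (μ := volume)
      (a := fun i : ℕ => (i:ℝ)) (n := n)
      (f := fun v₂ => f v₁ * f v₂ * g (v₁ - v₂)) (fun k _ => by
        push_cast
        exact II_inner hfmeas hgmeas hgeven hgbdd hM v₁ (k:ℝ) ((k:ℝ)+1)
          (by linarith) (hfcell k))
    push_cast at hsum
    exact hsum.symm
  have hfn : IntegrableOn f (Ioc 0 (n:ℝ)) := fIOn hfper hf n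
  calc (∫ v₁ in (0:ℝ)..(n:ℝ), ∫ v₂ in (0:ℝ)..(n:ℝ), f v₁ * f v₂ * g (v₁ - v₂))
      = ∫ v₁ in (0:ℝ)..(n:ℝ), ∑ k ∈ Finset.range n,
          ∫ v₂ in ((k:ℕ):ℝ)..(((k:ℕ):ℝ)+1), f v₁ * f v₂ * g (v₁ - v₂) :=
        intervalIntegral.integral_congr (fun v₁ _ => hinner v₁)
    _ = ∑ k ∈ Finset.range n, ∫ v₁ in (0:ℝ)..(n:ℝ),
          ∫ v₂ in ((k:ℕ):ℝ)..(((k:ℕ):ℝ)+1), f v₁ * f v₂ * g (v₁ - v₂) :=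
        intervalIntegral.integral_finset_sum (fun k _ =>
          II_outer hfmeas hgmeas hgeven hgbdd hM 0 (n:ℝ) (k:ℝ) ((k:ℝ)+1)
            (by positivity) (by linarith) hfn (hfcell k))
    _ = ∑ k ∈ Finset.range n, ∑ j ∈ Finset.range n, cI f g ((j:ℤ) - (k:ℤ)) := by
        apply Finset.sum_congr rfl
        intro k _
        have hsum := intervalIntegral.sum_integral_adjacent_intervals (μ := volume)
          (a := fun i : ℕ => (i:ℝ)) (n := n)
          (f := fun v₁ => ∫ v₂ in ((k:ℕ):ℝ)..(((k:ℕ):ℝ)+1), f v₁ * f v₂ * g (v₁ - v₂))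
          (fun j _ => by
            push_cast
            exact II_outer hfmeas hgmeas hgeven hgbdd hM (j:ℝ) ((j:ℝ)+1) (k:ℝ) ((k:ℝ)+1)
              (by linarith) (by linarith) (hfcell j) (hfcell k))
        push_cast at hsum
        rw [← hsum]
        apply Finset.sum_congr rfl
        intro j _
        have hc := cell hfper hfmeas hgmeas hgeven hgbdd hM hf (j:ℤ) (k:ℤ)
        push_cast at hc
        exact hc
    _ = ∑ j ∈ Finset.range n, ∑ k ∈ Finset.range n, cI f g ((j:ℤ) - (k:ℤ)) :=
        Finset.sum_comm


lemma sumJK (d : ℤ → ℝ) (hd : ∀ m : ℤ, d (-m) = d m) (n : ℕ) :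
    ∑ j ∈ Finset.range n, ∑ k ∈ Finset.range n, d ((j:ℤ) - (k:ℤ)) =
      n * d 0 + 2 * ∑ l ∈ Finset.range n, ((n:ℝ) - ((l:ℝ)+1)) * d ((l:ℤ)+1) := by
  induction n with
  | zero => simp
  | succ n ih =>
    have hrefl : ∑ k ∈ Finset.range n, d ((n:ℤ) - (k:ℤ)) =
        ∑ l ∈ Finset.range n, d ((l:ℤ)+1) := by
      rw [← Finset.sum_range_reflect (fun l => d ((l:ℤ)+1)) n]
      apply Finset.sum_congr rfl
      intro j hj
      have hj' := Finset.mem_range.mp hj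
      congr 1
      omega
    have hneg : ∑ j ∈ Finset.range n, d ((j:ℤ) - (n:ℤ)) =
        ∑ l ∈ Finset.range n, d ((l:ℤ)+1) := by
      rw [← hrefl]
      apply Finset.sum_congr rfl
      intro j _
      rw [← hd ((n:ℤ) - j)]
      congr 1
      ring
    have e1 : ∑ j ∈ Finset.range (n+1), ∑ k ∈ Finset.range (n+1), d ((j:ℤ) - (k:ℤ))
        = (∑ j ∈ Finset.range n, ∑ k ∈ Finset.range n, d ((j:ℤ) - (k:ℤ)))
          + 2 * (∑ l ∈ Finset.range n, d ((l:ℤ)+1)) + d 0 := by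
      rw [Finset.sum_range_succ]
      have h2 : ∑ j ∈ Finset.range n, ∑ k ∈ Finset.range (n+1), d ((j:ℤ) - (k:ℤ))
          = ∑ j ∈ Finset.range n, (∑ k ∈ Finset.range n, d ((j:ℤ) - (k:ℤ)) + d ((j:ℤ) - (n:ℤ))) :=
        Finset.sum_congr rfl fun j _ => Finset.sum_range_succ _ n
      have h3 : ∑ k ∈ Finset.range (n+1), d ((n:ℤ) - (k:ℤ))
          = ∑ k ∈ Finset.range n, d ((n:ℤ) - (k:ℤ)) + d ((n:ℤ) - (n:ℤ)) :=
        Finset.sum_range_succ _ n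
      rw [h2, h3, Finset.sum_add_distrib, hneg, hrefl]
      have : ((n:ℤ) - (n:ℤ)) = 0 := by ring
      rw [this]
      ring
    rw [e1, ih]
    have e2 : ∑ l ∈ Finset.range (n+1), (((n+1:ℕ):ℝ) - ((l:ℝ)+1)) * d ((l:ℤ)+1)
        = ∑ l ∈ Finset.range n, (((n:ℝ)+1) - ((l:ℝ)+1)) * d ((l:ℤ)+1) := by
      rw [Finset.sum_range_succ]
      have hz : (((n+1:ℕ):ℝ) - (((n:ℕ):ℝ))-1) = 0 := by push_cast; ring
      have hz2 : ((((n+1:ℕ)):ℝ) - (((n:ℕ):ℝ)+1)) * d (((n:ℕ):ℤ)+1) = 0 := by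
        rw [show ((((n+1:ℕ)):ℝ) - (((n:ℕ):ℝ)+1)) = 0 by push_cast; ring, zero_mul]
      rw [hz2, add_zero]
      apply Finset.sum_congr rfl
      intro l _
      congr 1
      push_cast
      ring
    have e3 : ∑ l ∈ Finset.range n, (((n:ℝ)+1) - ((l:ℝ)+1)) * d ((l:ℤ)+1)
        = ∑ l ∈ Finset.range n, ((n:ℝ) - ((l:ℝ)+1)) * d ((l:ℤ)+1)
          + ∑ l ∈ Finset.range n, d ((l:ℤ)+1) := by
      rw [← Finset.sum_add_distrib]
      apply Finset.sum_congr rfl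
      intro l _
      ring
    rw [e2, e3]
    push_cast
    ring


lemma sumM1 (hM : ∀ l : ℕ, 1 ≤ l → ∀ x ∈ Set.Icc (-1:ℝ) 1, |g (x + (l : ℝ))| ≤ M l)
    (hMsum : Summable (fun l : ℕ => (l : ℝ) * M l)) :
    Summable (fun l : ℕ => M (l+1)) := by
  have h1 : Summable (fun l : ℕ => ((l+1:ℕ):ℝ) * M (l+1)) :=
    (summable_nat_add_iff 1).2 hMsum
  apply Summable.of_nonneg_of_le (fun l => M_nonneg hM (l+1) (by omega)) (fun l => ?_) h1
  have h0 := M_nonneg hM (l+1) (by omega)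
  have h2 : (1:ℝ) ≤ ((l+1:ℕ):ℝ) := by
    have : (0:ℝ) ≤ (l:ℝ) := Nat.cast_nonneg l
    push_cast
    linarith
  exact le_mul_of_one_le_left h0 h2

lemma cIb (hfmeas : Measurable f) (hgmeas : Measurable g)
    (hf : IntegrableOn f (Ioc 0 1))
    (hM : ∀ l : ℕ, 1 ≤ l → ∀ x ∈ Set.Icc (-1:ℝ) 1, |g (x + (l : ℝ))| ≤ M l) (l : ℕ) :
    |cI f g ((l:ℤ)+1)| ≤ M (l+1) * (∫ x, |f x| ∂muI)^2 := by
  apply cI_abs_le hfmeas hgmeas hf ((l:ℤ)+1)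
  intro x hx
  have := hM (l+1) (by omega) x hx
  rwa [show (((l+1:ℕ)):ℝ) = ((((l:ℤ)+1):ℤ):ℝ) by push_cast; ring] at this

lemma tendsto_main (hfmeas : Measurable f) (hgmeas : Measurable g)
    (hf : IntegrableOn f (Ioc 0 1))
    (hM : ∀ l : ℕ, 1 ≤ l → ∀ x ∈ Set.Icc (-1:ℝ) 1, |g (x + (l : ℝ))| ≤ M l)
    (hMsum : Summable (fun l : ℕ => (l : ℝ) * M l)) :
    Tendsto (fun n : ℕ => (1/(n:ℝ)) * ((n:ℝ) * cI f g 0 +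
        2 * ∑ l ∈ Finset.range n, ((n:ℝ) - ((l:ℝ)+1)) * cI f g ((l:ℤ)+1)))
      atTop (𝓝 (cI f g 0 + 2 * ∑' l : ℕ, cI f g ((l:ℤ)+1))) := by
  set K := (∫ x, |f x| ∂muI)^2 with hK
  have hK0 : 0 ≤ K := sq_nonneg _
  set L : ℕ → ℝ := fun l => cI f g ((l:ℤ)+1) with hL
  have hLb : ∀ l, |L l| ≤ M (l+1) * K := fun l => cIb hfmeas hgmeas hf hM l
  have hMsum' : Summable (fun l : ℕ => M (l+1)) := sumM1 hM hMsum
  have hbound_sum : Summable (fun l => 2 * (M (l+1) * K)) := ((hMsum'.mul_right K).mul_left 2)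
  set a : ℕ → ℕ → ℝ := fun n l => if l < n then 2 * (1 - ((l:ℝ)+1)/(n:ℝ)) * L l else 0 with ha'
  have hM0 : ∀ l : ℕ, 0 ≤ M (l+1) := fun l => M_nonneg hM (l+1) (by omega)
  have ha : ∀ n l, ‖a n l‖ ≤ 2 * (M (l+1) * K) := by
    intro n l
    by_cases h : l < n
    · have hn1 : (1:ℝ) ≤ (n:ℝ) := by exact_mod_cast Nat.one_le_iff_ne_zero.mpr (by omega)
      have hfrac0 : 0 ≤ ((l:ℝ)+1)/(n:ℝ) := by positivity
      have hfrac1 : ((l:ℝ)+1)/(n:ℝ) ≤ 1 := by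
        rw [div_le_one (by linarith)]
        have : (l:ℝ) + 1 ≤ (n:ℝ) := by exact_mod_cast h
        linarith
      simp only [ha', if_pos h]
      rw [Real.norm_eq_abs, abs_mul, abs_mul]
      have h2 : |(2:ℝ)| = 2 := by norm_num
      have h3 : |1 - ((l:ℝ)+1)/(n:ℝ)| ≤ 1 := by rw [abs_le]; constructor <;> linarith
      calc |(2:ℝ)| * |1 - ((l:ℝ)+1)/(n:ℝ)| * |L l| ≤ 2 * 1 * (M (l+1) * K) := by
            rw [h2]
            apply mul_le_mul (by nlinarith) (hLb l) (abs_nonneg _) (by positivity)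
        _ = 2 * (M (l+1) * K) := by ring
    · simp only [ha', if_neg h, norm_zero]
      have := hM0 l
      nlinarith
  have hconv : ∀ l, Tendsto (fun n => a n l) atTop (𝓝 (2 * L l)) := by
    intro l
    have h1 : Tendsto (fun n : ℕ => 2 * (1 - ((l:ℝ)+1)/(n:ℝ)) * L l) atTop
        (𝓝 (2 * (1 - 0) * L l)) :=
      (((tendsto_const_div_atTop_nhds_zero_nat ((l:ℝ)+1)).const_sub 1).const_mul 2).mul_const _
    have h2 : (2 * (1 - (0:ℝ)) * L l) = 2 * L l := by ring
    rw [h2] at h1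
    apply h1.congr'
    filter_upwards [eventually_gt_atTop l] with n hn
    simp only [ha', if_pos hn]
  have hT := tendsto_tsum_of_dominated_convergence hbound_sum hconv (Eventually.of_forall ha)
  have htsum2 : ∑' l, 2 * L l = 2 * ∑' l, L l := tsum_mul_left
  rw [htsum2] at hT
  have hfinal := (tendsto_const_nhds (x := cI f g 0) (f := atTop)).add hT
  apply hfinal.congr'
  filter_upwards [eventually_ge_atTop 1] with n hn
  have hn0 : (n:ℝ) ≠ 0 := by
    have : (1:ℝ) ≤ (n:ℝ) := by exact_mod_cast hn
    linarith
  have hts : ∑' l, a n l = ∑ l ∈ Finset.range n, a n l :=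
    tsum_eq_sum (fun l hl => by
      have h : ¬ l < n := by simpa using hl
      simp only [ha', if_neg h])
  rw [hts]
  have hsum_eq : ∑ l ∈ Finset.range n, a n l =
      ∑ l ∈ Finset.range n, (1/(n:ℝ)) * (2 * (((n:ℝ) - ((l:ℝ)+1)) * L l)) := by
    apply Finset.sum_congr rfl
    intro l hl
    have hln := Finset.mem_range.mp hl
    simp only [ha', if_pos hln]
    field_simp
  rw [hsum_eq, ← Finset.mul_sum, ← Finset.mul_sum]
  field_simp
  ring


lemma rhs_eq (hfmeas : Measurable f) (hgmeas : Measurable g)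
    (hgbdd : ∃ B : ℝ, ∀ x ∈ Set.Icc (-1:ℝ) 1, |g x| ≤ B)
    (hM : ∀ l : ℕ, 1 ≤ l → ∀ x ∈ Set.Icc (-1:ℝ) 1, |g (x + (l : ℝ))| ≤ M l)
    (hMsum : Summable (fun l : ℕ => (l : ℝ) * M l))
    (hf : IntegrableOn f (Ioc 0 1)) :
    (∫ v₁ in (0:ℝ)..1, ∫ v₂ in (0:ℝ)..1,
        f v₁ * f v₂ * (g (v₁ - v₂) + 2 * ∑' l : ℕ, g (v₁ - v₂ + ((l : ℝ) + 1)))) =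
      cI f g 0 + 2 * ∑' l : ℕ, cI f g ((l:ℤ)+1) := by
  classical
  set S : ℝ → ℝ := fun x => ∑' l : ℕ, g (x + ((l:ℝ) + 1)) with hS
  have hSapp : ∀ y : ℝ, (∑' l : ℕ, g (y + ((l:ℝ) + 1))) = S y := fun y => rfl
  have hMsum' : Summable (fun l : ℕ => M (l+1)) := sumM1 hM hMsum
  have hterm : ∀ x ∈ Icc (-1:ℝ) 1, ∀ l : ℕ, |g (x + ((l:ℝ)+1))| ≤ M (l+1) := by
    intro x hx l
    have := hM (l+1) (by omega) x hx
    rwa [show (((l+1:ℕ)):ℝ) = (l:ℝ)+1 by push_cast; ring] at this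
  have hSb : ∀ x ∈ Icc (-1:ℝ) 1, |S x| ≤ ∑' l, M (l+1) := by
    intro x hx
    have hsum : Summable (fun l : ℕ => |g (x + ((l:ℝ)+1))|) :=
      Summable.of_nonneg_of_le (fun _ => abs_nonneg _) (hterm x hx) hMsum'
    calc |S x| ≤ ∑' l : ℕ, |g (x + ((l:ℝ)+1))| := by
          simpa [Real.norm_eq_abs] using norm_tsum_le_tsum_norm (f := fun l : ℕ => g (x + ((l:ℝ)+1))) (by simpa [Real.norm_eq_abs] using hsum)
      _ ≤ ∑' l, M (l+1) := Summable.tsum_le_tsum (hterm x hx) hsum hMsum'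
  have hSmeas : AEStronglyMeasurable (fun p : ℝ × ℝ => S (p.1 - p.2)) (muI.prod muI) := by
    have hpart : ∀ N : ℕ, Measurable
        (fun p : ℝ × ℝ => ∑ l ∈ Finset.range N, g (p.1 - p.2 + ((l:ℝ)+1))) := by
      intro N
      exact Finset.measurable_sum _
        (fun l _ => hgmeas.comp ((measurable_fst.sub measurable_snd).add_const _))
    have hae : ∀ᵐ p ∂(muI.prod muI), Tendsto
        (fun N => ∑ l ∈ Finset.range N, g (p.1 - p.2 + ((l:ℝ)+1))) atTop
        (𝓝 (S (p.1 - p.2))) := by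
      filter_upwards [ae_box] with p hp
      have hsg : Summable (fun l : ℕ => g (p.1 - p.2 + ((l:ℝ)+1))) :=
        Summable.of_norm_bounded hMsum'
          (fun l => by simpa [Real.norm_eq_abs] using hterm _ (box_diff hp) l)
      exact hsg.hasSum.tendsto_sum_nat
    exact (aemeasurable_of_tendsto_metrizable_ae atTop
      (fun N => (hpart N).aemeasurable) hae).aestronglyMeasurable
  obtain ⟨B, hB⟩ := hgbdd
  have hbase : Integrable (fun p : ℝ × ℝ => f p.1 * f p.2) (muI.prod muI) := hf.mul_prod hf
  have hintS : Integrable (fun p : ℝ × ℝ => f p.1 * f p.2 * S (p.1 - p.2)) (muI.prod muI) := by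
    apply Integrable.mono' (hbase.norm.const_mul (∑' l, M (l+1)))
    · exact ((hfmeas.comp measurable_fst).mul
        (hfmeas.comp measurable_snd)).aestronglyMeasurable.mul hSmeas
    · filter_upwards [ae_box] with p hp
      have h1 := hSb _ (box_diff hp)
      have : ‖f p.1 * f p.2 * S (p.1 - p.2)‖ = |f p.1 * f p.2| * |S (p.1 - p.2)| := by
        rw [Real.norm_eq_abs, abs_mul]
      rw [this]
      calc |f p.1 * f p.2| * |S (p.1 - p.2)| ≤ |f p.1 * f p.2| * ∑' l, M (l+1) :=
            mul_le_mul_of_nonneg_left h1 (abs_nonneg _)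
        _ = (∑' l, M (l+1)) * ‖f p.1 * f p.2‖ := by rw [Real.norm_eq_abs]; ring
  have hint0 : Integrable (fun p : ℝ × ℝ => f p.1 * f p.2 * g (p.1 - p.2)) (muI.prod muI) := by
    have h := prodInt hfmeas hgmeas hf 0 (C := B) (fun x hx => by simpa using hB x hx)
    simpa using h
  have hring : (fun p : ℝ × ℝ => f p.1 * f p.2 * (g (p.1 - p.2) + 2 * S (p.1 - p.2)))
      = fun p => f p.1 * f p.2 * g (p.1 - p.2) + 2 * (f p.1 * f p.2 * S (p.1 - p.2)) := by
    funext p; ring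
  have hPhi : Integrable (fun p : ℝ × ℝ =>
      f p.1 * f p.2 * (g (p.1 - p.2) + 2 * S (p.1 - p.2))) (muI.prod muI) := by
    rw [hring]
    exact hint0.add (hintS.const_mul 2)
  have step1 : (∫ v₁ in (0:ℝ)..1, ∫ v₂ in (0:ℝ)..1,
      f v₁ * f v₂ * (g (v₁ - v₂) + 2 * S (v₁ - v₂))) =
      ∫ p, f p.1 * f p.2 * (g (p.1 - p.2) + 2 * S (p.1 - p.2)) ∂(muI.prod muI) :=
    iter_to_prod (fun v₁ v₂ => f v₁ * f v₂ * (g (v₁ - v₂) + 2 * S (v₁ - v₂))) hPhi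
  simp_rw [hSapp]
  rw [step1]
  have hsplit : (∫ p, f p.1 * f p.2 * (g (p.1 - p.2) + 2 * S (p.1 - p.2)) ∂(muI.prod muI))
      = (∫ p, f p.1 * f p.2 * g (p.1 - p.2) ∂(muI.prod muI))
        + 2 * ∫ p, f p.1 * f p.2 * S (p.1 - p.2) ∂(muI.prod muI) := by
    rw [hring, integral_add hint0 (hintS.const_mul 2), integral_const_mul]
  rw [hsplit]
  have h0 : (∫ p, f p.1 * f p.2 * g (p.1 - p.2) ∂(muI.prod muI)) = cI f g 0 := by
    unfold cI
    congr 1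
    funext p
    norm_num
  have hFint : ∀ l : ℕ, Integrable
      (fun p : ℝ × ℝ => f p.1 * f p.2 * g (p.1 - p.2 + ((l:ℝ)+1))) (muI.prod muI) :=
    fun l => prodInt hfmeas hgmeas hf ((l:ℝ)+1) (fun x hx => hterm x hx l)
  have hFsum : Summable (fun l : ℕ =>
      ∫ p, ‖f p.1 * f p.2 * g (p.1 - p.2 + ((l:ℝ)+1))‖ ∂(muI.prod muI)) := by
    refine Summable.of_nonneg_of_le (fun l => integral_nonneg (fun p => norm_nonneg _))
      (fun l => normInt_bound hfmeas hgmeas hf ((l:ℝ)+1) (fun x hx => hterm x hx l))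
      (hMsum'.mul_right ((∫ x, |f x| ∂muI)^2))
  have hswap2 : (∫ p, f p.1 * f p.2 * S (p.1 - p.2) ∂(muI.prod muI))
      = ∑' l : ℕ, cI f g ((l:ℤ)+1) := by
    have he : (fun p : ℝ × ℝ => f p.1 * f p.2 * S (p.1 - p.2))
        = fun p => ∑' l : ℕ, f p.1 * f p.2 * g (p.1 - p.2 + ((l:ℝ)+1)) := by
      funext p
      rw [hS]
      exact (tsum_mul_left).symm
    rw [he, ← integral_tsum_of_summable_integral_norm hFint hFsum]
    apply tsum_congr
    intro l
    unfold cI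
    congr 1
    funext p
    rw [show ((((l:ℤ)+1):ℤ):ℝ) = (l:ℝ)+1 by push_cast; ring]
  rw [h0, hswap2]

end main
end Stmt5Aux

/-- Variance asymptotics: if `f` is 1-periodic and square integrable on `[0,1]`,
and `g` is even, bounded on `[-1,1]`, with `∑_l l · sup_{|x|≤1}|g(x+l)| < ∞`,
then `(1/n)∫_0^n∫_0^n f(v₁)f(v₂)g(v₁−v₂) dv₁dv₂` converges to
`∫_0^1∫_0^1 f(v₁)f(v₂)[g(v₁−v₂) + 2∑_{l≥1} g(v₁−v₂+l)] dv₁dv₂`. -/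
theorem stmt_5 (f g : ℝ → ℝ)
    (hfper : ∀ x : ℝ, f (x + 1) = f x) (hfmeas : Measurable f)
    (hfL2 : MemLp f 2 (volume.restrict (Set.Icc (0:ℝ) 1)))
    (hgmeas : Measurable g) (hgeven : ∀ x, g (-x) = g x)
    (hgbdd : ∃ B : ℝ, ∀ x ∈ Set.Icc (-1:ℝ) 1, |g x| ≤ B)
    (M : ℕ → ℝ)
    (hM : ∀ l : ℕ, 1 ≤ l → ∀ x ∈ Set.Icc (-1:ℝ) 1, |g (x + (l : ℝ))| ≤ M l)
    (hMsum : Summable (fun l : ℕ => (l : ℝ) * M l)) :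
    Filter.Tendsto
      (fun n : ℕ =>
        (1 / (n : ℝ)) *
          ∫ v₁ in (0:ℝ)..(n : ℝ), ∫ v₂ in (0:ℝ)..(n : ℝ),
            f v₁ * f v₂ * g (v₁ - v₂))
      Filter.atTop
      (nhds (∫ v₁ in (0:ℝ)..1, ∫ v₂ in (0:ℝ)..1,
        f v₁ * f v₂ *
          (g (v₁ - v₂) + 2 * ∑' l : ℕ, g (v₁ - v₂ + ((l : ℝ) + 1))))) := by
  have hf := Stmt5Aux.hf1 hfL2
  have heq : ∀ n : ℕ,
      (∫ v₁ in (0:ℝ)..(n:ℝ), ∫ v₂ in (0:ℝ)..(n:ℝ), f v₁ * f v₂ * g (v₁ - v₂))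
        = (n:ℝ) * Stmt5Aux.cI f g 0 +
          2 * ∑ l ∈ Finset.range n, ((n:ℝ) - ((l:ℝ)+1)) * Stmt5Aux.cI f g ((l:ℤ)+1) := by
    intro n
    rw [Stmt5Aux.decomp hfper hfmeas hgmeas hgeven hgbdd hM hf n]
    exact Stmt5Aux.sumJK (Stmt5Aux.cI f g) (Stmt5Aux.cI_even hgeven) n
  have hmain := Stmt5Aux.tendsto_main hfmeas hgmeas hf hM hMsum
  rw [Stmt5Aux.rhs_eq hfmeas hgmeas hgbdd hM hMsum hf]
  exact hmain.congr (fun n => by rw [heq n])
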